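/- Let P₀ ∈ ℂ, θ ∈ ℝ, and r₁, r₂ > 0; set R = r₁ + 𝕚r₂ and let P₁ = P₀ + r₁e^{𝕚θ}, P₂ = P₀ + Re^{𝕚θ}, P₃ = P₀ + 𝕚r₂e^{𝕚θ} be the anticlockwise vertices of a rectangle in ℂ. Let φ₀, φ₁, φ₂, φ₃ ∈ ℍ_ℂ be nonzero and pairwise ℂ-linearly independent. Then there exist A₀, A₁ ∈ ℍ_ℂ such that the degree-one polynomial A(z) = A₀ + z·A₁ satisfies A(P_ℓ)·L·A(P_ℓ)^c = φ_ℓ for ℓ = 0, 1, 2, 3, if and only if the following three conditions hold: (1) φ_ℓ + φ_ℓ^c = 0 and φ_ℓ·φ_ℓ^c = 0 for ℓ = 0, 1, 2, 3; (2) |R|²·φ₀ + R²·φ₁ − |R|²·φ₂ − R²·φ₃ = 0, where |R|² = r₁² + r₂²; (3) there exist pairs (s_ℓ, t_ℓ) ∈ ℂ² \ {(0,0)} and scalars ν_ℓ ∈ ℂ \ {0} with φ_ℓ = ν_ℓ·((s_ℓ² + t_ℓ²)·i + 𝕚(s_ℓ² − t_ℓ²)·j + 2𝕚 s_ℓ t_ℓ·k)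 for ℓ = 0, 1, 2, 3, such that the cross-ratio equality (s₀t₂ − s₂t₀)(s₁t₃ − s₃t₁)(P₁ − P₂)(P₀ − P₃) = (s₁t₂ − s₂t₁)(s₀t₃ − s₃t₀)(P₀ − P₂)(P₁ − P₃) holds. -/

import Mathlib

open Quaternion

/-- The complex quaternion `a + b i + c j + d k`. -/
noncomputable def mkQ (a b c d : ℂ) : Quaternion ℂ := ⟨a, b, c, d⟩

/-- The null quaternion `L = i + 𝕚 j ∈ ℍ_ℂ`. -/
noncomputable def Lq : Quaternion ℂ := mkQ 0 1 Complex.I 0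

noncomputable def conicQ (s t : ℂ) : Quaternion ℂ :=
  mkQ 0 (s ^ 2 + t ^ 2) (Complex.I * (s ^ 2 - t ^ 2)) (2 * Complex.I * s * t)

lemma mkQ_re (a b c d : ℂ) : (mkQ a b c d).re = a := rfl
lemma mkQ_imI (a b c d : ℂ) : (mkQ a b c d).imI = b := rfl
lemma mkQ_imJ (a b c d : ℂ) : (mkQ a b c d).imJ = c := rfl
lemma mkQ_imK (a b c d : ℂ) : (mkQ a b c d).imK = d := rfl

lemma Itrick : ∀ n : ℕ, Complex.I ^ (n + 2) = - Complex.I ^ n := fun n => by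
  rw [pow_add, Complex.I_sq]; ring

set_option maxHeartbeats 4000000 in
lemma keyQ (A₀ A₁ : Quaternion ℂ) (z : ℂ) :
    (A₀ + z • A₁) * Lq * star (A₀ + z • A₁) =
      conicQ ((A₀.re - Complex.I * A₀.imK) + z * (A₁.re - Complex.I * A₁.imK))
        ((A₀.imI + Complex.I * A₀.imJ) + z * (A₁.imI + Complex.I * A₁.imJ)) := by
  have hI : Complex.I ^ 2 = -1 := Complex.I_sq
  have hI3 : Complex.I ^ 3 = -Complex.I := by rw [pow_succ, hI]; ring
  apply Quaternion.ext <;>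
    simp only [conicQ, mkQ_re, mkQ_imI, mkQ_imJ, mkQ_imK, Lq, Quaternion.re_mul, Quaternion.imI_mul, Quaternion.imJ_mul,
      Quaternion.imK_mul, Quaternion.re_add, Quaternion.imI_add, Quaternion.imJ_add,
      Quaternion.imK_add, Quaternion.re_star, Quaternion.imI_star, Quaternion.imJ_star,
      Quaternion.imK_star, Quaternion.re_smul, Quaternion.imI_smul, Quaternion.imJ_smul,
      Quaternion.imK_smul, smul_eq_mul] <;>
    (ring_nf; all_goals (simp only [hI, hI3]; ring))

lemma conicQ_smul (μ s t : ℂ) : conicQ (μ * s) (μ * t) = (μ ^ 2) • conicQ s t := by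
  apply Quaternion.ext <;> simp [conicQ, mkQ_re, mkQ_imI, mkQ_imJ, mkQ_imK, Quaternion.re_smul] <;> ring

lemma conicQ_zero : conicQ 0 0 = 0 := by
  apply Quaternion.ext <;> simp [conicQ, mkQ_re, mkQ_imI, mkQ_imJ, mkQ_imK]

lemma keyQ' (a b a' b' z : ℂ) :
    (mkQ a b 0 0 + z • mkQ a' b' 0 0) * Lq * star (mkQ a b 0 0 + z • mkQ a' b' 0 0) =
      conicQ (a + z * a') (b + z * b') := by
  rw [keyQ]
  norm_num [mkQ_re, mkQ_imI, mkQ_imJ, mkQ_imK]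

set_option maxHeartbeats 1000000 in
lemma conicQ_isotropic (s t : ℂ) :
    conicQ s t + star (conicQ s t) = 0 ∧ conicQ s t * star (conicQ s t) = 0 := by
  have hI : Complex.I ^ 2 = -1 := Complex.I_sq
  constructor <;>
    (apply Quaternion.ext <;>
      simp only [conicQ, mkQ_re, mkQ_imI, mkQ_imJ, mkQ_imK, Quaternion.re_mul, Quaternion.imI_mul, Quaternion.imJ_mul,
        Quaternion.imK_mul, Quaternion.re_add, Quaternion.imI_add, Quaternion.imJ_add,
        Quaternion.imK_add, Quaternion.re_star, Quaternion.imI_star, Quaternion.imJ_star,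
        Quaternion.imK_star, Quaternion.re_zero, Quaternion.imI_zero, Quaternion.imJ_zero,
        Quaternion.imK_zero] <;>
      (ring_nf; all_goals (simp only [hI]; ring)))

lemma prop_of_det {a b s t : ℂ} (h : a * t - s * b = 0) (hst : ¬(s = 0 ∧ t = 0)) :
    ∃ l : ℂ, a = l * s ∧ b = l * t := by
  by_cases hs : s = 0
  · have ht : t ≠ 0 := fun ht => hst ⟨hs, ht⟩
    have ha : a = 0 := by
      have h' : a * t = 0 := by rw [hs] at h; linear_combination h
      rcases mul_eq_zero.mp h' with h' | h'
      · exact h'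
      · exact absurd h' ht
    exact ⟨b / t, by rw [ha, hs]; ring, by field_simp⟩
  · refine ⟨a / s, by field_simp, ?_⟩
    field_simp
    linear_combination -h

lemma mobius (x0 x1 x2 x3 s0 t0 s1 t1 s2 t2 s3 t3 : ℂ)
    (h01 : x0 ≠ x1) (h02 : x0 ≠ x2) (h12 : x1 ≠ x2) (h03 : x0 ≠ x3) (h13 : x1 ≠ x3)
    (d01 : s0 * t1 - s1 * t0 ≠ 0) (d02 : s0 * t2 - s2 * t0 ≠ 0) (d12 : s1 * t2 - s2 * t1 ≠ 0)
    (hne2 : ¬(s2 = 0 ∧ t2 = 0)) (hne3 : ¬(s3 = 0 ∧ t3 = 0))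
    (hcr : (s0 * t2 - s2 * t0) * (s1 * t3 - s3 * t1) * (x1 - x2) * (x0 - x3)
         = (s1 * t2 - s2 * t1) * (s0 * t3 - s3 * t0) * (x0 - x2) * (x1 - x3)) :
    ∃ p0 p1 q0 q1 l0 l1 l2 l3 : ℂ,
      l0 ≠ 0 ∧ l1 ≠ 0 ∧ l2 ≠ 0 ∧ l3 ≠ 0 ∧
      p0 + x0 * p1 = l0 * s0 ∧ q0 + x0 * q1 = l0 * t0 ∧
      p0 + x1 * p1 = l1 * s1 ∧ q0 + x1 * q1 = l1 * t1 ∧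
      p0 + x2 * p1 = l2 * s2 ∧ q0 + x2 * q1 = l2 * t2 ∧
      p0 + x3 * p1 = l3 * s3 ∧ q0 + x3 * q1 = l3 * t3 := by
  set α := (x2 - x0) * (s1 * t2 - s2 * t1) with hα
  set β := -((x2 - x1) * (s0 * t2 - s2 * t0)) with hβ
  have hαne : α ≠ 0 := mul_ne_zero (sub_ne_zero.mpr (Ne.symm h02)) d12
  have hβne : β ≠ 0 := neg_ne_zero.mpr (mul_ne_zero (sub_ne_zero.mpr (Ne.symm h12)) d02)
  have e2 : (-(α * s0 * x1 + β * s1 * x0) + x2 * (α * s0 + β * s1)) * t2 -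
      s2 * (-(α * t0 * x1 + β * t1 * x0) + x2 * (α * t0 + β * t1)) = 0 := by
    rw [hα, hβ]; ring
  obtain ⟨l2, hl2s, hl2t⟩ := prop_of_det e2 hne2
  have e3 : (-(α * s0 * x1 + β * s1 * x0) + x3 * (α * s0 + β * s1)) * t3 -
      s3 * (-(α * t0 * x1 + β * t1 * x0) + x3 * (α * t0 + β * t1)) = 0 := by
    rw [hα, hβ]; linear_combination -hcr
  obtain ⟨l3, hl3s, hl3t⟩ := prop_of_det e3 hne3
  have degen : ∀ y : ℂ, y ≠ x0 → y ≠ x1 →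
      ¬(-(α * s0 * x1 + β * s1 * x0) + y * (α * s0 + β * s1) = 0 ∧
        -(α * t0 * x1 + β * t1 * x0) + y * (α * t0 + β * t1) = 0) := by
    rintro y hy0 hy1 ⟨hs, ht⟩
    have h' : (α * (y - x1)) * (s0 * t1 - s1 * t0) = 0 := by linear_combination t1 * hs - s1 * ht
    rcases mul_eq_zero.mp h' with h'' | h''
    · rcases mul_eq_zero.mp h'' with h3 | h3
      · exact hαne h3
      · exact hy1 (sub_eq_zero.mp h3)
    · exact d01 h''
  have hl2ne : l2 ≠ 0 := by
    rintro rfl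
    exact degen x2 (Ne.symm h02) (Ne.symm h12) ⟨by rw [hl2s]; ring, by rw [hl2t]; ring⟩
  have hl3ne : l3 ≠ 0 := by
    rintro rfl
    exact degen x3 (Ne.symm h03) (Ne.symm h13) ⟨by rw [hl3s]; ring, by rw [hl3t]; ring⟩
  exact ⟨-(α * s0 * x1 + β * s1 * x0), α * s0 + β * s1,
    -(α * t0 * x1 + β * t1 * x0), α * t0 + β * t1,
    α * (x0 - x1), β * (x1 - x0), l2, l3,
    mul_ne_zero hαne (sub_ne_zero.mpr h01), mul_ne_zero hβne (sub_ne_zero.mpr (Ne.symm h01)),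
    hl2ne, hl3ne, by ring, by ring, by ring, by ring, hl2s, hl2t, hl3s, hl3t⟩

set_option maxHeartbeats 1000000 in
lemma quadIdC (f₀ f₁ g₀ g₁ a E : ℂ) (r₁ r₂ : ℝ) (b c d : ℂ)
    (hb : b = a + (r₁ : ℂ) * E)
    (hc : c = a + ((r₁ : ℂ) + Complex.I * (r₂ : ℂ)) * E)
    (hd : d = a + Complex.I * (r₂ : ℂ) * E) :
    ((r₁ : ℂ) ^ 2 + (r₂ : ℂ) ^ 2) * ((f₀ + a * f₁) * (g₀ + a * g₁)) +
      ((r₁ : ℂ) + Complex.I * (r₂ : ℂ)) ^ 2 * ((f₀ + b * f₁) * (g₀ + b * g₁)) -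
      ((r₁ : ℂ) ^ 2 + (r₂ : ℂ) ^ 2) * ((f₀ + c * f₁) * (g₀ + c * g₁)) -
      ((r₁ : ℂ) + Complex.I * (r₂ : ℂ)) ^ 2 * ((f₀ + d * f₁) * (g₀ + d * g₁)) = 0 := by
  subst hb hc hd
  have h2 : Complex.I ^ 2 = -Complex.I ^ 0 := Itrick 0
  have h3 : Complex.I ^ 3 = -Complex.I ^ 1 := Itrick 1
  have h4 : Complex.I ^ 4 = -Complex.I ^ 2 := Itrick 2
  ring_nf
  simp only [h4, h3, h2, pow_zero, pow_one]
  ring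

set_option maxHeartbeats 4000000 in
/-- Interpolation of four prescribed nonzero, pairwise linearly
independent values `φ₀, φ₁, φ₂, φ₃ ∈ ℍ_ℂ` at the vertices of a rectangle by
`Φ(z) = A(z) L A(z)^c` with `A` of degree one is possible iff the `φ_ℓ` are isotropic
vectors, satisfy the linear relation `|R|²φ₀ + R²φ₁ − |R|²φ₂ − R²φ₃ = 0`, and the
cross-ratios of the vertices and of the conic parameters of the `φ_ℓ` agree. -/
theorem enneper_patch_interpolation (θ r₁ r₂ : ℝ) (hr₁ : 0 < r₁) (hr₂ : 0 < r₂)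
    (R : ℂ) (hR : R = (r₁ : ℂ) + Complex.I * (r₂ : ℂ))
    (P : Fin 4 → ℂ)
    (hP₁ : P 1 = P 0 + (r₁ : ℂ) * Complex.exp (Complex.I * (θ : ℂ)))
    (hP₂ : P 2 = P 0 + R * Complex.exp (Complex.I * (θ : ℂ)))
    (hP₃ : P 3 = P 0 + Complex.I * (r₂ : ℂ) * Complex.exp (Complex.I * (θ : ℂ)))
    (φ : Fin 4 → Quaternion ℂ)
    (hφne : ∀ ℓ, φ ℓ ≠ 0)
    (hφind : ∀ ℓ m, ℓ ≠ m → ∀ c : ℂ, φ ℓ ≠ c • φ m) :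
    (∃ A₀ A₁ : Quaternion ℂ, ∀ ℓ : Fin 4,
        (A₀ + P ℓ • A₁) * Lq * star (A₀ + P ℓ • A₁) = φ ℓ) ↔
      ((∀ ℓ, φ ℓ + star (φ ℓ) = 0 ∧ φ ℓ * star (φ ℓ) = 0) ∧
        ((r₁ : ℂ) ^ 2 + (r₂ : ℂ) ^ 2) • φ 0 + R ^ 2 • φ 1 -
          ((r₁ : ℂ) ^ 2 + (r₂ : ℂ) ^ 2) • φ 2 - R ^ 2 • φ 3 = 0 ∧
        ∃ s t ν : Fin 4 → ℂ,
          (∀ ℓ, (s ℓ, t ℓ) ≠ (0, 0)) ∧ (∀ ℓ, ν ℓ ≠ 0) ∧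
          (∀ ℓ, φ ℓ = ν ℓ • mkQ 0 (s ℓ ^ 2 + t ℓ ^ 2)
            (Complex.I * (s ℓ ^ 2 - t ℓ ^ 2)) (2 * Complex.I * s ℓ * t ℓ)) ∧
          (s 0 * t 2 - s 2 * t 0) * (s 1 * t 3 - s 3 * t 1) * (P 1 - P 2) * (P 0 - P 3) =
            (s 1 * t 2 - s 2 * t 1) * (s 0 * t 3 - s 3 * t 0) * (P 0 - P 2) * (P 1 - P 3)) := by
  have hE : Complex.exp (Complex.I * (θ : ℂ)) ≠ 0 := Complex.exp_ne_zero _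
  have hr₁' : (r₁ : ℂ) ≠ 0 := by exact_mod_cast hr₁.ne'
  have hr₂' : (r₂ : ℂ) ≠ 0 := by exact_mod_cast hr₂.ne'
  have hR0 : (r₁ : ℂ) + Complex.I * (r₂ : ℂ) ≠ 0 := by
    intro h
    have := congrArg Complex.re h
    simp at this
    linarith
  have hcne : ((r₁ : ℂ) ^ 2 + (r₂ : ℂ) ^ 2) ≠ 0 := by
    intro h
    have h' : ((r₁ ^ 2 + r₂ ^ 2 : ℝ) : ℂ) = 0 := by push_cast; linear_combination h
    have : (r₁ ^ 2 + r₂ ^ 2 : ℝ) = 0 := by exact_mod_cast h'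
    nlinarith
  constructor
  · rintro ⟨A₀, A₁, hA⟩
    obtain ⟨p₀, hp₀⟩ : ∃ x, x = A₀.re - Complex.I * A₀.imK := ⟨_, rfl⟩
    obtain ⟨p₁, hp₁⟩ : ∃ x, x = A₁.re - Complex.I * A₁.imK := ⟨_, rfl⟩
    obtain ⟨q₀, hq₀⟩ : ∃ x, x = A₀.imI + Complex.I * A₀.imJ := ⟨_, rfl⟩
    obtain ⟨q₁, hq₁⟩ : ∃ x, x = A₁.imI + Complex.I * A₁.imJ := ⟨_, rfl⟩
    have hkey : ∀ ℓ, φ ℓ = conicQ (p₀ + P ℓ * p₁) (q₀ + P ℓ * q₁) := by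
      intro ℓ; rw [hp₀, hp₁, hq₀, hq₁, ← hA ℓ, keyQ]
    refine ⟨fun ℓ => by rw [hkey ℓ]; exact conicQ_isotropic _ _, ?_, ?_⟩
    · rw [hkey 0, hkey 1, hkey 2, hkey 3, hP₁, hP₂, hP₃, hR]
      have h2 : Complex.I ^ 2 = -Complex.I ^ 0 := Itrick 0
      have h3 : Complex.I ^ 3 = -Complex.I ^ 1 := Itrick 1
      have h4 : Complex.I ^ 4 = -Complex.I ^ 2 := Itrick 2
      have h5 : Complex.I ^ 5 = -Complex.I ^ 3 := Itrick 3
      have h6 : Complex.I ^ 6 = -Complex.I ^ 4 := Itrick 4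
      apply Quaternion.ext <;>
        simp only [conicQ, mkQ_re, mkQ_imI, mkQ_imJ, mkQ_imK, Quaternion.re_add, Quaternion.imI_add, Quaternion.imJ_add,
          Quaternion.imK_add, Quaternion.re_sub, Quaternion.imI_sub, Quaternion.imJ_sub,
          Quaternion.imK_sub, Quaternion.re_smul, Quaternion.imI_smul, Quaternion.imJ_smul,
          Quaternion.imK_smul, Quaternion.re_zero, Quaternion.imI_zero, Quaternion.imJ_zero,
          Quaternion.imK_zero, smul_eq_mul] <;>
        (ring_nf; all_goals (simp only [h6, h5, h4, h3, h2, pow_zero, pow_one]; ring))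
    · refine ⟨fun ℓ => p₀ + P ℓ * p₁, fun ℓ => q₀ + P ℓ * q₁, fun _ => 1, ?_, fun _ => one_ne_zero,
        fun ℓ => by rw [one_smul]; exact hkey ℓ, by ring⟩
      intro ℓ h
      have h1 : p₀ + P ℓ * p₁ = 0 := congrArg Prod.fst h
      have h2 : q₀ + P ℓ * q₁ = 0 := congrArg Prod.snd h
      exact hφne ℓ (by rw [hkey ℓ, h1, h2]; exact conicQ_zero)
  · rintro ⟨-, hlin, s, t, ν, hne, hν, hφs, hcr⟩
    -- normalize ν to 1
    choose μ hμ using fun ℓ => IsAlgClosed.exists_pow_nat_eq (ν ℓ) (n := 2) (by norm_num)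
    have hμne : ∀ ℓ, μ ℓ ≠ 0 := fun ℓ h => hν ℓ (by rw [← hμ ℓ, h]; ring)
    set s' : Fin 4 → ℂ := fun ℓ => μ ℓ * s ℓ with hs'
    set t' : Fin 4 → ℂ := fun ℓ => μ ℓ * t ℓ with ht'
    have hs'app : ∀ ℓ, s' ℓ = μ ℓ * s ℓ := fun ℓ => by rw [hs']
    have ht'app : ∀ ℓ, t' ℓ = μ ℓ * t ℓ := fun ℓ => by rw [ht']
    have hφ' : ∀ ℓ, φ ℓ = conicQ (s' ℓ) (t' ℓ) := fun ℓ => by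
      rw [hs'app, ht'app, conicQ_smul, hμ ℓ]; exact hφs ℓ
    have hne' : ∀ ℓ, ¬(s' ℓ = 0 ∧ t' ℓ = 0) := by
      rintro ℓ ⟨h1, h2⟩
      rw [hs'app] at h1; rw [ht'app] at h2
      rcases mul_eq_zero.mp h1 with h | h
      · exact hμne ℓ h
      · rcases mul_eq_zero.mp h2 with h' | h'
        · exact hμne ℓ h'
        · exact hne ℓ (by rw [h, h'])
    have hdet : ∀ a b : Fin 4, a ≠ b → s' a * t' b - s' b * t' a ≠ 0 := by
      intro a b hab h
      obtain ⟨l, hls, hlt⟩ := prop_of_det h (hne' b)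
      exact hφind a b hab (l ^ 2) (by rw [hφ' a, hls, hlt, conicQ_smul, ← hφ' b])
    have hcr' : (s' 0 * t' 2 - s' 2 * t' 0) * (s' 1 * t' 3 - s' 3 * t' 1) *
          (P 1 - P 2) * (P 0 - P 3) =
        (s' 1 * t' 2 - s' 2 * t' 1) * (s' 0 * t' 3 - s' 3 * t' 0) *
          (P 0 - P 2) * (P 1 - P 3) := by
      simp only [hs'app, ht'app]
      linear_combination (μ 0 * μ 1 * μ 2 * μ 3) * hcr
    -- distinctness of vertices
    have h01 : P 0 ≠ P 1 := by
      intro h; rw [hP₁] at h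
      exact mul_ne_zero hr₁' hE (by linear_combination -h)
    have h02 : P 0 ≠ P 2 := by
      intro h; rw [hP₂, hR] at h
      exact mul_ne_zero hR0 hE (by linear_combination -h)
    have h12 : P 1 ≠ P 2 := by
      intro h; rw [hP₁, hP₂, hR] at h
      exact mul_ne_zero (mul_ne_zero Complex.I_ne_zero hr₂') hE (by linear_combination -h)
    have h03 : P 0 ≠ P 3 := by
      intro h; rw [hP₃] at h
      exact mul_ne_zero (mul_ne_zero Complex.I_ne_zero hr₂') hE (by linear_combination -h)
    have h13 : P 1 ≠ P 3 := by
      intro h; rw [hP₁, hP₃] at h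
      have hx : ((r₁ : ℂ) - Complex.I * (r₂ : ℂ)) * Complex.exp (Complex.I * (θ : ℂ)) = 0 := by
        linear_combination h
      rcases mul_eq_zero.mp hx with h' | h'
      · have := congrArg Complex.re h'
        simp at this
        linarith
      · exact hE h'
    obtain ⟨p0, p1, q0, q1, l0, l1, l2, l3, hl0, hl1, hl2, hl3,
        e0s, e0t, e1s, e1t, e2s, e2t, e3s, e3t⟩ :=
      mobius (P 0) (P 1) (P 2) (P 3) (s' 0) (t' 0) (s' 1) (t' 1) (s' 2) (t' 2) (s' 3) (t' 3)
        h01 h02 h12 h03 h13 (hdet 0 1 (by decide)) (hdet 0 2 (by decide))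
        (hdet 1 2 (by decide)) (hne' 2) (hne' 3) hcr'
    -- component equations from the linear relation
    rw [hφ' 0, hφ' 1, hφ' 2, hφ' 3, hR] at hlin
    have hi := congrArg QuaternionAlgebra.imI hlin
    have hj := congrArg QuaternionAlgebra.imJ hlin
    have hk := congrArg QuaternionAlgebra.imK hlin
    simp only [conicQ, mkQ_re, mkQ_imI, mkQ_imJ, mkQ_imK, Quaternion.imI_add, Quaternion.imJ_add, Quaternion.imK_add,
      Quaternion.imI_sub, Quaternion.imJ_sub, Quaternion.imK_sub, Quaternion.imI_smul,
      Quaternion.imJ_smul, Quaternion.imK_smul, Quaternion.imI_zero, Quaternion.imJ_zero,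
      Quaternion.imK_zero, smul_eq_mul] at hi hj hk
    have hj' : ((r₁ : ℂ) ^ 2 + (r₂ : ℂ) ^ 2) * (s' 0 ^ 2 - t' 0 ^ 2) +
        ((r₁ : ℂ) + Complex.I * (r₂ : ℂ)) ^ 2 * (s' 1 ^ 2 - t' 1 ^ 2) -
        ((r₁ : ℂ) ^ 2 + (r₂ : ℂ) ^ 2) * (s' 2 ^ 2 - t' 2 ^ 2) -
        ((r₁ : ℂ) + Complex.I * (r₂ : ℂ)) ^ 2 * (s' 3 ^ 2 - t' 3 ^ 2) = 0 :=
      mul_left_cancel₀ Complex.I_ne_zero (by linear_combination hj)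
    have hk' : ((r₁ : ℂ) ^ 2 + (r₂ : ℂ) ^ 2) * (s' 0 * t' 0) +
        ((r₁ : ℂ) + Complex.I * (r₂ : ℂ)) ^ 2 * (s' 1 * t' 1) -
        ((r₁ : ℂ) ^ 2 + (r₂ : ℂ) ^ 2) * (s' 2 * t' 2) -
        ((r₁ : ℂ) + Complex.I * (r₂ : ℂ)) ^ 2 * (s' 3 * t' 3) = 0 :=
      mul_left_cancel₀ (mul_ne_zero two_ne_zero Complex.I_ne_zero) (by linear_combination hk)
    have Es : ((r₁ : ℂ) ^ 2 + (r₂ : ℂ) ^ 2) * s' 0 ^ 2 +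
        ((r₁ : ℂ) + Complex.I * (r₂ : ℂ)) ^ 2 * s' 1 ^ 2 -
        ((r₁ : ℂ) ^ 2 + (r₂ : ℂ) ^ 2) * s' 2 ^ 2 -
        ((r₁ : ℂ) + Complex.I * (r₂ : ℂ)) ^ 2 * s' 3 ^ 2 = 0 := by
      linear_combination (hi + hj') / 2
    have Et : ((r₁ : ℂ) ^ 2 + (r₂ : ℂ) ^ 2) * t' 0 ^ 2 +
        ((r₁ : ℂ) + Complex.I * (r₂ : ℂ)) ^ 2 * t' 1 ^ 2 -
        ((r₁ : ℂ) ^ 2 + (r₂ : ℂ) ^ 2) * t' 2 ^ 2 -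
        ((r₁ : ℂ) + Complex.I * (r₂ : ℂ)) ^ 2 * t' 3 ^ 2 = 0 := by
      linear_combination (hi - hj') / 2
    -- quadratic identities for the interpolating line
    have hP₂' : P 2 = P 0 + ((r₁ : ℂ) + Complex.I * (r₂ : ℂ)) * Complex.exp (Complex.I * (θ : ℂ)) := by
      rw [hP₂, hR]
    have Fss := quadIdC p0 p1 p0 p1 (P 0) (Complex.exp (Complex.I * (θ : ℂ))) r₁ r₂
      (P 1) (P 2) (P 3) hP₁ hP₂' hP₃
    have Ftt := quadIdC q0 q1 q0 q1 (P 0) (Complex.exp (Complex.I * (θ : ℂ))) r₁ r₂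
      (P 1) (P 2) (P 3) hP₁ hP₂' hP₃
    have Fst := quadIdC p0 p1 q0 q1 (P 0) (Complex.exp (Complex.I * (θ : ℂ))) r₁ r₂
      (P 1) (P 2) (P 3) hP₁ hP₂' hP₃
    rw [e0s, e1s, e2s, e3s] at Fss
    rw [e0t, e1t, e2t, e3t] at Ftt
    rw [e0s, e1s, e2s, e3s, e0t, e1t, e2t, e3t] at Fst
    have Gs : ((r₁ : ℂ) ^ 2 + (r₂ : ℂ) ^ 2) * (l0 ^ 2 - l3 ^ 2) * s' 0 ^ 2 +
        ((r₁ : ℂ) + Complex.I * (r₂ : ℂ)) ^ 2 * (l1 ^ 2 - l3 ^ 2) * s' 1 ^ 2 -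
        ((r₁ : ℂ) ^ 2 + (r₂ : ℂ) ^ 2) * (l2 ^ 2 - l3 ^ 2) * s' 2 ^ 2 = 0 := by
      linear_combination Fss - l3 ^ 2 * Es
    have Gt : ((r₁ : ℂ) ^ 2 + (r₂ : ℂ) ^ 2) * (l0 ^ 2 - l3 ^ 2) * t' 0 ^ 2 +
        ((r₁ : ℂ) + Complex.I * (r₂ : ℂ)) ^ 2 * (l1 ^ 2 - l3 ^ 2) * t' 1 ^ 2 -
        ((r₁ : ℂ) ^ 2 + (r₂ : ℂ) ^ 2) * (l2 ^ 2 - l3 ^ 2) * t' 2 ^ 2 = 0 := by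
      linear_combination Ftt - l3 ^ 2 * Et
    have Gst : ((r₁ : ℂ) ^ 2 + (r₂ : ℂ) ^ 2) * (l0 ^ 2 - l3 ^ 2) * (s' 0 * t' 0) +
        ((r₁ : ℂ) + Complex.I * (r₂ : ℂ)) ^ 2 * (l1 ^ 2 - l3 ^ 2) * (s' 1 * t' 1) -
        ((r₁ : ℂ) ^ 2 + (r₂ : ℂ) ^ 2) * (l2 ^ 2 - l3 ^ 2) * (s' 2 * t' 2) = 0 := by
      linear_combination Fst - l3 ^ 2 * hk'
    have key0 : (((r₁ : ℂ) ^ 2 + (r₂ : ℂ) ^ 2) * (l0 ^ 2 - l3 ^ 2)) *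
        ((s' 1 * t' 0 - s' 0 * t' 1) * (s' 2 * t' 0 - s' 0 * t' 2)) = 0 := by
      linear_combination t' 1 * t' 2 * Gs + s' 1 * s' 2 * Gt - (s' 1 * t' 2 + s' 2 * t' 1) * Gst
    have key1 : (((r₁ : ℂ) + Complex.I * (r₂ : ℂ)) ^ 2 * (l1 ^ 2 - l3 ^ 2)) *
        ((s' 0 * t' 1 - s' 1 * t' 0) * (s' 2 * t' 1 - s' 1 * t' 2)) = 0 := by
      linear_combination t' 0 * t' 2 * Gs + s' 0 * s' 2 * Gt - (s' 0 * t' 2 + s' 2 * t' 0) * Gst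
    have key2 : (((r₁ : ℂ) ^ 2 + (r₂ : ℂ) ^ 2) * (l2 ^ 2 - l3 ^ 2)) *
        ((s' 0 * t' 2 - s' 2 * t' 0) * (s' 1 * t' 2 - s' 2 * t' 1)) = 0 := by
      linear_combination -(t' 0 * t' 1 * Gs + s' 0 * s' 1 * Gt - (s' 0 * t' 1 + s' 1 * t' 0) * Gst)
    have d0 : l0 ^ 2 = l3 ^ 2 := by
      have hY : (s' 1 * t' 0 - s' 0 * t' 1) * (s' 2 * t' 0 - s' 0 * t' 2) ≠ 0 :=
        mul_ne_zero (fun h => hdet 0 1 (by decide) (by linear_combination -h))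
          (fun h => hdet 0 2 (by decide) (by linear_combination -h))
      exact sub_eq_zero.mp ((mul_eq_zero.mp ((mul_eq_zero.mp key0).resolve_right hY)).resolve_left hcne)
    have d1 : l1 ^ 2 = l3 ^ 2 := by
      have hY : (s' 0 * t' 1 - s' 1 * t' 0) * (s' 2 * t' 1 - s' 1 * t' 2) ≠ 0 :=
        mul_ne_zero (fun h => hdet 0 1 (by decide) (by linear_combination h))
          (fun h => hdet 1 2 (by decide) (by linear_combination -h))
      exact sub_eq_zero.mp ((mul_eq_zero.mp ((mul_eq_zero.mp key1).resolve_right hY)).resolve_left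
        (pow_ne_zero 2 hR0))
    have d2 : l2 ^ 2 = l3 ^ 2 := by
      have hY : (s' 0 * t' 2 - s' 2 * t' 0) * (s' 1 * t' 2 - s' 2 * t' 1) ≠ 0 :=
        mul_ne_zero (hdet 0 2 (by decide)) (hdet 1 2 (by decide))
      exact sub_eq_zero.mp ((mul_eq_zero.mp ((mul_eq_zero.mp key2).resolve_right hY)).resolve_left hcne)
    -- final construction
    have hver : ∀ (z sz tz lz : ℂ), lz ^ 2 = l3 ^ 2 →
        p0 + z * p1 = lz * sz → q0 + z * q1 = lz * tz →
        (mkQ (l3⁻¹ * p0) (l3⁻¹ * q0) 0 0 + z • mkQ (l3⁻¹ * p1) (l3⁻¹ * q1) 0 0) * Lq *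
          star (mkQ (l3⁻¹ * p0) (l3⁻¹ * q0) 0 0 + z • mkQ (l3⁻¹ * p1) (l3⁻¹ * q1) 0 0) =
          conicQ sz tz := by
      intro z sz tz lz hl hs ht
      rw [keyQ']
      have h1 : l3⁻¹ * p0 + z * (l3⁻¹ * p1) = (l3⁻¹ * lz) * sz := by
        linear_combination l3⁻¹ * hs
      have h2 : l3⁻¹ * q0 + z * (l3⁻¹ * q1) = (l3⁻¹ * lz) * tz := by
        linear_combination l3⁻¹ * ht
      rw [h1, h2, conicQ_smul]
      have h3 : (l3⁻¹ * lz) ^ 2 = 1 := by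
        rw [mul_pow, hl, inv_pow]
        exact inv_mul_cancel₀ (pow_ne_zero 2 hl3)
      rw [h3, one_smul]
    refine ⟨mkQ (l3⁻¹ * p0) (l3⁻¹ * q0) 0 0, mkQ (l3⁻¹ * p1) (l3⁻¹ * q1) 0 0, ?_⟩
    intro ℓ
    fin_cases ℓ
    · exact (hver (P 0) (s' 0) (t' 0) l0 d0 e0s e0t).trans (hφ' 0).symm
    · exact (hver (P 1) (s' 1) (t' 1) l1 d1 e1s e1t).trans (hφ' 1).symm
    · exact (hver (P 2) (s' 2) (t' 2) l2 d2 e2s e2t).trans (hφ' 2).symm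
    · exact (hver (P 3) (s' 3) (t' 3) l3 rfl e3s e3t).trans (hφ' 3).symm
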